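/- Let Ω be a probability amplitude on ℝⁿ with |q|²Ω(q)² integrable, let M be an n×n real symmetric positive definite matrix, and assume the position covariance matrix V, with entries V_{jk} := ⟨q_j q_k⟩ − ⟨q_j⟩⟨q_k⟩, is positive definite. Then every eigenvalue of V⁻¹M is real and positive, and the mean value of the quantum potential satisfies ⟨Q⟩ ≥ (ħ²/8) λ_max(V⁻¹M), where λ_max(V⁻¹M) is the largest eigenvalue of V⁻¹M. -/

import Mathlib

open MeasureTheory Matrix Filter

/-- Partial derivative `∂ⱼ f` of a function on `ℝⁿ`. -/
noncomputable def pd {n : ℕ} (j : Fin n) (f : (Fin n → ℝ) → ℝ) (q : Fin n → ℝ) : ℝ :=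
  fderiv ℝ f q (Pi.single j 1)

/-- Mean value `⟨T⟩ = ∫ Ω² T` with respect to the probability density `Ω²`. -/
noncomputable def expec {n : ℕ} (Ω T : (Fin n → ℝ) → ℝ) : ℝ :=
  ∫ q, (Ω q) ^ 2 * T q

/-- Mean value of the quantum potential `⟨Q⟩ = -(ħ²/2) ∫ Ω Σⱼₖ Mⱼₖ ∂ⱼ∂ₖΩ`. -/
noncomputable def meanQ {n : ℕ} (hbar : ℝ) (M : Matrix (Fin n) (Fin n) ℝ)
    (Ω : (Fin n → ℝ) → ℝ) : ℝ :=
  -(hbar ^ 2 / 2) * ∫ q, Ω q * ∑ j, ∑ k, M j k * pd j (pd k Ω) q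

/-- The position covariance matrix `Vⱼₖ = ⟨qⱼqₖ⟩ - ⟨qⱼ⟩⟨qₖ⟩`. -/
noncomputable def posCovMatrix {n : ℕ} (Ω : (Fin n → ℝ) → ℝ) :
    Matrix (Fin n) (Fin n) ℝ :=
  Matrix.of fun j k =>
    expec Ω (fun q => q j * q k) - expec Ω (fun q => q j) * expec Ω (fun q => q k)

lemma pd_mul {n : ℕ} {f g : (Fin n → ℝ) → ℝ} {q : Fin n → ℝ} (j : Fin n)
    (hf : DifferentiableAt ℝ f q) (hg : DifferentiableAt ℝ g q) :
    pd j (fun x => f x * g x) q = pd j f q * g q + f q * pd j g q := by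
  unfold pd
  rw [fderiv_fun_mul hf hg]
  simp only [ContinuousLinearMap.add_apply, ContinuousLinearMap.smul_apply, smul_eq_mul]; ring

lemma pd_coord {n : ℕ} (j k : Fin n) (q : Fin n → ℝ) :
    pd k (fun x : Fin n → ℝ => x j) q = if k = j then 1 else 0 := by
  unfold pd
  have : (fun x : Fin n → ℝ => x j) = (ContinuousLinearMap.proj j : (Fin n → ℝ) →L[ℝ] ℝ) := rfl
  rw [this, ContinuousLinearMap.fderiv]
  simp [Pi.single_apply, eq_comm]

lemma contDiff_pd {n : ℕ} {Ω : (Fin n → ℝ) → ℝ} (hΩc : ContDiff ℝ 2 Ω) (k : Fin n) :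
    ContDiff ℝ 1 (pd k Ω) := by
  have h1 : ContDiff ℝ 1 (fderiv ℝ Ω) := hΩc.fderiv_right (by norm_num)
  exact h1.clm_apply contDiff_const

section Analysis
variable {n : ℕ} {Ω : (Fin n → ℝ) → ℝ}

lemma pd_sq {n : ℕ} {Ω : (Fin n → ℝ) → ℝ} (hΩc : ContDiff ℝ 2 Ω) (k : Fin n) (q : Fin n → ℝ) :
    pd k (fun x => (Ω x) ^ 2) q = 2 * (Ω q * pd k Ω q) := by
  have h : (fun x => (Ω x) ^ 2) = fun x => Ω x * Ω x := by ext x; ring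
  rw [h, pd_mul k (hΩc.differentiable two_ne_zero q)
    (hΩc.differentiable two_ne_zero q)]
  ring

lemma pd_coord_sq (hΩc : ContDiff ℝ 2 Ω) (j k : Fin n) (q : Fin n → ℝ) :
    pd k (fun x : Fin n → ℝ => x j * (Ω x) ^ 2) q
      = (if k = j then 1 else 0) * (Ω q) ^ 2 + q j * (2 * (Ω q * pd k Ω q)) := by
  have hcoord : DifferentiableAt ℝ (fun x : Fin n → ℝ => x j) q :=
    (ContinuousLinearMap.proj j : (Fin n → ℝ) →L[ℝ] ℝ).differentiableAt
  have hsq : DifferentiableAt ℝ (fun x => (Ω x) ^ 2) q :=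
    ((hΩc.differentiable two_ne_zero q)).pow 2
  rw [pd_mul k hcoord hsq, pd_coord, pd_sq hΩc]

lemma integrable_sq (hΩnorm : ∫ q, (Ω q) ^ 2 = 1) :
    Integrable (fun q : Fin n → ℝ => (Ω q) ^ 2) := by
  by_contra h
  rw [integral_undef h] at hΩnorm
  norm_num at hΩnorm

lemma integrable_mix (hΩc : ContDiff ℝ 2 Ω)
    (hq2 : Integrable (fun q : Fin n → ℝ => ‖q‖ ^ 2 * (Ω q) ^ 2))
    (hint2 : ∀ j k, Integrable (fun q => pd j Ω q * pd k Ω q)) (j k : Fin n) :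
    Integrable (fun q : Fin n → ℝ => q j * (Ω q * pd k Ω q)) := by
  refine Integrable.mono' ((hq2.add (hint2 k k)).div_const 2) ?_ (.of_forall fun q => ?_)
  · exact (((continuous_apply j).mul (hΩc.continuous.mul
      (contDiff_pd hΩc k).continuous)).aestronglyMeasurable)
  · have h1 : |q j| ≤ ‖q‖ := by
      simpa using norm_le_pi_norm q j
    have h2 : 0 ≤ ‖q‖ := norm_nonneg q
    simp only [Pi.add_apply]
    rw [Real.norm_eq_abs, abs_mul, abs_mul, ← mul_assoc]
    have e1 : |q j| * |Ω q| * |pd k Ω q| ≤ ((|q j| * |Ω q|) ^ 2 + |pd k Ω q| ^ 2) / 2 := by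
      nlinarith [sq_nonneg (|q j| * |Ω q| - |pd k Ω q|)]
    have e2 : (|q j| * |Ω q|) ^ 2 = q j ^ 2 * Ω q ^ 2 := by rw [mul_pow, sq_abs, sq_abs]
    have e3 : q j ^ 2 ≤ ‖q‖ ^ 2 := by nlinarith [sq_abs (q j), mul_self_le_mul_self (abs_nonneg (q j)) h1]
    have e4 : |pd k Ω q| ^ 2 = pd k Ω q * pd k Ω q := by rw [sq_abs]; ring
    nlinarith [sq_nonneg (Ω q), mul_le_mul_of_nonneg_right e3 (sq_nonneg (Ω q))]
end Analysis

lemma cs_integral {n : ℕ} {f g : (Fin n → ℝ) → ℝ}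
    (hfm : AEStronglyMeasurable f volume) (hgm : AEStronglyMeasurable g volume)
    (hf2 : Integrable (fun q => f q * f q)) (hg2 : Integrable (fun q => g q * g q)) :
    (∫ q, f q * g q) ^ 2 ≤ (∫ q, f q * f q) * (∫ q, g q * g q) := by
  have hfg : Integrable (fun q => f q * g q) := by
    refine Integrable.mono' ((hf2.add hg2).div_const 2) (hfm.mul hgm) (.of_forall fun q => ?_)
    simp only [Pi.add_apply]
    rw [Real.norm_eq_abs, abs_mul]
    nlinarith [sq_nonneg (|f q| - |g q|), sq_abs (f q), sq_abs (g q), abs_nonneg (f q),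
      abs_nonneg (g q)]
  have hq : ∀ t : ℝ, 0 ≤ (∫ q, g q * g q) * (t * t) + (2 * ∫ q, f q * g q) * t
      + ∫ q, f q * f q := by
    intro t
    rw [show t * t = t ^ 2 from (sq t).symm]
    have h0 : 0 ≤ ∫ q, (f q + t * g q) ^ 2 := integral_nonneg fun q => sq_nonneg _
    rw [show (fun q => (f q + t * g q) ^ 2)
        = fun q => (f q * f q + t * (2 * (f q * g q))) + t ^ 2 * (g q * g q) from
      funext fun q => by ring] at h0
    have i1 : Integrable (fun q => f q * f q + t * (2 * (f q * g q))) volume :=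
      hf2.add ((hfg.const_mul 2).const_mul t)
    have i2 : Integrable (fun q => t ^ 2 * (g q * g q)) volume := hg2.const_mul _
    have i3 : Integrable (fun q => t * (2 * (f q * g q))) volume := (hfg.const_mul 2).const_mul t
    rw [integral_add i1 i2, integral_add hf2 i3, integral_const_mul, integral_const_mul,
      integral_const_mul] at h0
    nlinarith [h0]
  have hd := discrim_le_zero hq
  rw [discrim] at hd
  nlinarith [hd]

lemma trace_nonneg_of_posSemidef {n : ℕ} {P : Matrix (Fin n) (Fin n) ℝ}
    (hP : P.PosSemidef) : 0 ≤ P.trace := by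
  refine Finset.sum_nonneg fun i _ => ?_
  have := hP.dotProduct_mulVec_nonneg (Pi.single i 1)
  simpa [Matrix.mulVec_single, dotProduct, Pi.single_apply] using this

lemma posdef_conj {n : ℕ} {A B : Matrix (Fin n) (Fin n) ℝ} (hA : A.PosDef)
    (hdet : IsUnit B.det) (hB : Bᴴ = B) : (B * A * B).PosDef := by
  refine Matrix.PosDef.of_dotProduct_mulVec_pos ?_ ?_
  · show (B * A * B)ᴴ = B * A * B
    rw [Matrix.conjTranspose_mul, Matrix.conjTranspose_mul, hB, hA.1.eq, mul_assoc]
  · intro x hx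
    have hBu : IsUnit B := (Matrix.isUnit_iff_isUnit_det B).2 hdet
    have hinj : Function.Injective (B.mulVec) := Matrix.mulVec_injective_iff_isUnit.2 hBu
    have hy : B *ᵥ x ≠ 0 := by
      intro h
      exact hx (hinj (by rw [h, Matrix.mulVec_zero]))
    have h2 := hA.dotProduct_mulVec_pos hy
    have e : star x ⬝ᵥ (B * A * B) *ᵥ x = star (B *ᵥ x) ⬝ᵥ A *ᵥ (B *ᵥ x) := by
      rw [← Matrix.mulVec_mulVec, ← Matrix.mulVec_mulVec, dotProduct_mulVec (star x)]
      congr 1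
      rw [star_trivial, star_trivial, ← Matrix.mulVec_transpose,
        ← Matrix.conjTranspose_eq_transpose_of_trivial, hB]
    rw [e]
    exact h2
lemma integrable_Ωpd {n : ℕ} {Ω : (Fin n → ℝ) → ℝ} (hΩc : ContDiff ℝ 2 Ω)
    (IΩ2 : Integrable (fun q : Fin n → ℝ => (Ω q) ^ 2))
    (hint2 : ∀ j k, Integrable (fun q => pd j Ω q * pd k Ω q)) (k : Fin n) :
    Integrable (fun q : Fin n → ℝ => Ω q * pd k Ω q) := by
  refine Integrable.mono' ((IΩ2.add (hint2 k k)).div_const 2)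
    ((hΩc.continuous.mul (contDiff_pd hΩc k).continuous).aestronglyMeasurable)
    (.of_forall fun q => ?_)
  simp only [Pi.add_apply]
  rw [Real.norm_eq_abs, abs_mul]
  nlinarith [sq_nonneg (|Ω q| - |pd k Ω q|), sq_abs (Ω q), sq_abs (pd k Ω q),
    abs_nonneg (Ω q), abs_nonneg (pd k Ω q)]

lemma integral_double_sum {n : ℕ} (c : Fin n → Fin n → ℝ) (f : Fin n → Fin n → (Fin n → ℝ) → ℝ)
    (hf : ∀ j k, Integrable (f j k) volume) :
    ∫ q, ∑ j, ∑ k, c j k * f j k q = ∑ j, ∑ k, c j k * ∫ q, f j k q := by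
  rw [integral_finset_sum _ (fun j _ => integrable_finset_sum _ fun k _ => (hf j k).const_mul _)]
  refine Finset.sum_congr rfl fun j _ => ?_
  rw [integral_finset_sum _ (fun k _ => (hf j k).const_mul _)]
  exact Finset.sum_congr rfl fun k _ => integral_const_mul _ _

lemma quad_eq {n : ℕ} (A : Matrix (Fin n) (Fin n) ℝ) (x : Fin n → ℝ) :
    x ⬝ᵥ A *ᵥ x = ∑ j, ∑ k, (x j * x k) * A j k := by
  simp only [dotProduct, Matrix.mulVec, Finset.mul_sum]
  exact Finset.sum_congr rfl fun j _ => Finset.sum_congr rfl fun k _ => by ring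

lemma spec_real {n : ℕ} {S : Matrix (Fin n) (Fin n) ℝ} (hS : S.IsHermitian) :
    spectrum ℝ S = Set.range hS.eigenvalues := by
  conv_lhs => rw [hS.spectral_theorem]
  rw [Unitary.conjStarAlgAut_apply, Unitary.spectrum_star_right_conjugate, RCLike.ofReal_real_eq_id, Function.id_comp,
    spectrum_diagonal]

lemma trace_eq_sum_eig {n : ℕ} {S : Matrix (Fin n) (Fin n) ℝ} (hS : S.IsHermitian) :
    S.trace = ∑ i, hS.eigenvalues i := by
  conv_lhs => rw [hS.spectral_theorem]
  rw [Unitary.conjStarAlgAut_apply, Matrix.trace_mul_cycle]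
  have : (star (hS.eigenvectorUnitary : Matrix (Fin n) (Fin n) ℝ))
      * (hS.eigenvectorUnitary : Matrix (Fin n) (Fin n) ℝ) = 1 :=
    Unitary.coe_star_mul_self _
  rw [this, one_mul, Matrix.trace_diagonal]
  simp [RCLike.ofReal_real_eq_id]

lemma spec_complex {n : ℕ} {S : Matrix (Fin n) (Fin n) ℝ} (hS : S.IsHermitian) :
    spectrum ℂ (S.map (Complex.ofReal : ℝ → ℂ))
      = Set.range (fun i => (hS.eigenvalues i : ℂ)) := by
  have hmap : ∀ A B : Matrix (Fin n) (Fin n) ℝ,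
      (A * B).map (Complex.ofReal : ℝ → ℂ) = A.map Complex.ofReal * B.map Complex.ofReal :=
    fun A B => Matrix.map_mul (f := Complex.ofRealHom)
  set U : Matrix (Fin n) (Fin n) ℝ := (hS.eigenvectorUnitary : Matrix (Fin n) (Fin n) ℝ)
  have h1 : U * star U = 1 := Unitary.coe_mul_star_self _
  have h2 : star U * U = 1 := Unitary.coe_star_mul_self _
  have hstar : (star U).map (Complex.ofReal : ℝ → ℂ) = star (U.map Complex.ofReal) := by
    ext i j
    simp [Matrix.conjTranspose_apply, Matrix.star_apply]
  have hUc : U.map (Complex.ofReal : ℝ → ℂ) ∈ unitary (Matrix (Fin n) (Fin n) ℂ) := by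
    constructor
    · rw [← hstar, ← hmap, h2, Matrix.map_one Complex.ofReal Complex.ofReal_zero
        Complex.ofReal_one]
    · rw [← hstar, ← hmap, h1, Matrix.map_one Complex.ofReal Complex.ofReal_zero
        Complex.ofReal_one]
  conv_lhs => rw [hS.spectral_theorem]
  rw [Unitary.conjStarAlgAut_apply, hmap, hmap, hstar]
  have := Unitary.spectrum_star_right_conjugate (R := ℂ) (U := (⟨_, hUc⟩ : unitary (Matrix (Fin n) (Fin n) ℂ)))
    (a := ((Matrix.diagonal (RCLike.ofReal ∘ hS.eigenvalues)).map (Complex.ofReal : ℝ → ℂ)))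
  rw [this, RCLike.ofReal_real_eq_id, Function.id_comp,
    Matrix.diagonal_map Complex.ofReal_zero, spectrum_diagonal]

/-- every eigenvalue of `V⁻¹M` is real and positive and
`⟨Q⟩ ≥ (ħ²/8) λmax(V⁻¹M)`. -/
theorem meanQ_ge_linear_bound {n : ℕ} (hn : 1 ≤ n) (hbar : ℝ) (hhbar : 0 < hbar)
    (Ω : (Fin n → ℝ) → ℝ) (hΩc : ContDiff ℝ 2 Ω) (hΩpos : ∀ q, 0 < Ω q)
    (hΩnorm : ∫ q, (Ω q) ^ 2 = 1)
    (M : Matrix (Fin n) (Fin n) ℝ) (hM : M.PosDef)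
    -- `|q|² Ω²` is integrable
    (hq2 : Integrable (fun q : Fin n → ℝ => ‖q‖ ^ 2 * (Ω q) ^ 2))
    (hq1 : ∀ j, Integrable (fun q : Fin n → ℝ => (Ω q) ^ 2 * q j))
    (hqq : ∀ j k, Integrable (fun q : Fin n → ℝ => (Ω q) ^ 2 * (q j * q k)))
    -- the position covariance matrix is positive definite
    (hV : (posCovMatrix Ω).PosDef)
    -- all integrals appearing converge absolutely
    (hint1 : ∀ j k, Integrable (fun q => Ω q * pd j (pd k Ω) q))
    (hint2 : ∀ j k, Integrable (fun q => pd j Ω q * pd k Ω q))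
    -- all boundary terms in integration by parts vanish
    (hbd1 : ∀ j k, ∫ q, pd j (fun x => Ω x * pd k Ω x) q = 0)
    (hbd2 : ∀ k, ∫ q, pd k (fun x => (Ω x) ^ 2) q = 0)
    (hbd3 : ∀ j k, ∫ q, pd k (fun x : Fin n → ℝ => x j * (Ω x) ^ 2) q = 0) :
    (∀ μ ∈ spectrum ℂ (((posCovMatrix Ω)⁻¹ * M).map (Complex.ofReal : ℝ → ℂ)),
      μ.im = 0 ∧ 0 < μ.re) ∧
    ∃ lmax ∈ spectrum ℝ ((posCovMatrix Ω)⁻¹ * M),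
      (∀ r ∈ spectrum ℝ ((posCovMatrix Ω)⁻¹ * M), r ≤ lmax) ∧
      meanQ hbar M Ω ≥ hbar ^ 2 / 8 * lmax := by
  classical
  set V := posCovMatrix Ω with hVdef
  set W := V⁻¹ with hWdef
  have hW : W.PosDef := hV.inv
  have hΩd : Differentiable ℝ Ω := hΩc.differentiable two_ne_zero
  have hpdd : ∀ k, Differentiable ℝ (pd k Ω) := fun k => (contDiff_pd hΩc k).differentiable one_ne_zero
  set m : Fin n → ℝ := fun j => expec Ω (fun q => q j) with hmdef
  set G : Matrix (Fin n) (Fin n) ℝ :=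
    Matrix.of (fun j k => ∫ q, pd j Ω q * pd k Ω q) with hGdef
  have IΩ2 : Integrable (fun q : Fin n → ℝ => (Ω q) ^ 2) := integrable_sq hΩnorm
  have hΩpd : ∀ k, Integrable (fun q : Fin n → ℝ => Ω q * pd k Ω q) :=
    integrable_Ωpd hΩc IΩ2 hint2
  have hmix : ∀ j k, Integrable (fun q : Fin n → ℝ => q j * (Ω q * pd k Ω q)) :=
    integrable_mix hΩc hq2 hint2
  -- integration by parts identities
  have I1 : ∀ k, ∫ q, Ω q * pd k Ω q = 0 := by
    intro k
    have h := hbd2 k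
    simp_rw [pd_sq hΩc k] at h
    rw [integral_const_mul] at h
    linarith
  have I2 : ∀ j k, ∫ q, Ω q * pd j (pd k Ω) q = - ∫ q, pd j Ω q * pd k Ω q := by
    intro j k
    have h := hbd1 j k
    have hpt : ∀ q, pd j (fun x => Ω x * pd k Ω x) q
        = pd j Ω q * pd k Ω q + Ω q * pd j (pd k Ω) q :=
      fun q => pd_mul j (hΩd q) (hpdd k q)
    simp_rw [hpt] at h
    rw [integral_add (hint2 j k) (hint1 j k)] at h
    linarith
  have I3 : ∀ j k, ∫ q, q j * (Ω q * pd k Ω q) = -(if k = j then 1 else 0) / 2 := by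
    intro j k
    have h := hbd3 j k
    simp_rw [pd_coord_sq hΩc j k] at h
    have h1 : Integrable (fun q : Fin n → ℝ => (if k = j then 1 else 0) * (Ω q) ^ 2) :=
      IΩ2.const_mul _
    have h2 : Integrable (fun q : Fin n → ℝ => q j * (2 * (Ω q * pd k Ω q))) := by
      have e : (fun q : Fin n → ℝ => q j * (2 * (Ω q * pd k Ω q)))
          = fun q => 2 * (q j * (Ω q * pd k Ω q)) := funext fun q => by ring
      rw [e]; exact (hmix j k).const_mul 2
    rw [integral_add h1 h2, integral_const_mul, hΩnorm] at h
    have e : (fun q : Fin n → ℝ => q j * (2 * (Ω q * pd k Ω q)))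
        = fun q => 2 * (q j * (Ω q * pd k Ω q)) := funext fun q => by ring
    rw [e, integral_const_mul] at h
    split at h <;> split <;> first | linarith | simp_all
  -- ⟨Q⟩ in terms of G
  have e_meanQ : meanQ hbar M Ω = hbar ^ 2 / 2 * ∑ j, ∑ k, M j k * G j k := by
    unfold meanQ
    have e : (fun q => Ω q * ∑ j, ∑ k, M j k * pd j (pd k Ω) q)
        = fun q => ∑ j, ∑ k, M j k * (Ω q * pd j (pd k Ω) q) := by
      funext q
      rw [Finset.mul_sum]
      refine Finset.sum_congr rfl fun j _ => ?_
      rw [Finset.mul_sum]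
      exact Finset.sum_congr rfl fun k _ => by ring
    rw [e, integral_double_sum M (fun j k q => Ω q * pd j (pd k Ω) q) hint1]
    have e2 : ∑ j, ∑ k, M j k * ∫ q, Ω q * pd j (pd k Ω) q
        = - ∑ j, ∑ k, M j k * G j k := by
      rw [← Finset.sum_neg_distrib]
      refine Finset.sum_congr rfl fun j _ => ?_
      rw [← Finset.sum_neg_distrib]
      refine Finset.sum_congr rfl fun k _ => ?_
      rw [I2 j k]
      simp only [hGdef, Matrix.of_apply]
      ring
    rw [e2]
    ring
  -- covariance integrals
  have ecov : ∀ j k, (fun q : Fin n → ℝ => (Ω q) ^ 2 * ((q j - m j) * (q k - m k)))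
      = fun q => (Ω q) ^ 2 * (q j * q k) - m k * ((Ω q) ^ 2 * q j)
        - m j * ((Ω q) ^ 2 * q k) + (m j * m k) * (Ω q) ^ 2 :=
    fun j k => funext fun q => by ring
  have hcovint : ∀ j k, Integrable
      (fun q : Fin n → ℝ => (Ω q) ^ 2 * ((q j - m j) * (q k - m k))) := by
    intro j k
    rw [ecov j k]
    exact (((hqq j k).sub ((hq1 j).const_mul _)).sub ((hq1 k).const_mul _)).add
      (IΩ2.const_mul _)
  have hcov_eq : ∀ j k, ∫ q, (Ω q) ^ 2 * ((q j - m j) * (q k - m k)) = V j k := by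
    intro j k
    have ia1 : Integrable (fun q : Fin n → ℝ => (Ω q) ^ 2 * (q j * q k)
        - m k * ((Ω q) ^ 2 * q j)) := (hqq j k).sub ((hq1 j).const_mul _)
    have ia2 : Integrable (fun q : Fin n → ℝ => (Ω q) ^ 2 * (q j * q k)
        - m k * ((Ω q) ^ 2 * q j) - m j * ((Ω q) ^ 2 * q k)) := ia1.sub ((hq1 k).const_mul _)
    rw [ecov j k, integral_add ia2 (IΩ2.const_mul _), integral_sub ia1 ((hq1 k).const_mul _),
      integral_sub (hqq j k) ((hq1 j).const_mul _),
      integral_const_mul, integral_const_mul, integral_const_mul, hΩnorm]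
    simp only [hVdef, posCovMatrix, Matrix.of_apply, expec, hmdef]
    ring
  -- mixed integrals
  have emix : ∀ j k, (fun q : Fin n → ℝ => (q j - m j) * (Ω q * pd k Ω q))
      = fun q => q j * (Ω q * pd k Ω q) - m j * (Ω q * pd k Ω q) :=
    fun j k => funext fun q => by ring
  have hmix' : ∀ j k, Integrable (fun q : Fin n → ℝ => (q j - m j) * (Ω q * pd k Ω q)) := by
    intro j k
    rw [emix j k]
    exact (hmix j k).sub ((hΩpd k).const_mul _)
  have hmix_eq : ∀ j k, ∫ q, (q j - m j) * (Ω q * pd k Ω q)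
      = -(if k = j then 1 else 0) / 2 := by
    intro j k
    rw [emix j k, integral_sub (hmix j k) ((hΩpd k).const_mul _), integral_const_mul,
      I3 j k, I1 k]
    ring
  -- the key Cauchy–Schwarz inequality
  have key : ∀ a b : Fin n → ℝ,
      (∑ j, a j * b j) ^ 2 / 4
        ≤ (∑ j, ∑ k, (a j * a k) * V j k) * (∑ j, ∑ k, (b j * b k) * G j k) := by
    intro a b
    set f : (Fin n → ℝ) → ℝ := fun q => Ω q * (∑ j, a j * (q j - m j)) with hfdef
    set g : (Fin n → ℝ) → ℝ := fun q => ∑ k, b k * pd k Ω q with hgdef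
    have hfm : AEStronglyMeasurable f volume :=
      (hΩc.continuous.mul (continuous_finset_sum _ fun j _ =>
        continuous_const.mul ((continuous_apply j).sub continuous_const))).aestronglyMeasurable
    have hgm : AEStronglyMeasurable g volume :=
      (continuous_finset_sum _ fun k _ =>
        continuous_const.mul (contDiff_pd hΩc k).continuous).aestronglyMeasurable
    have eff : (fun q => f q * f q)
        = fun q => ∑ j, ∑ k, (a j * a k) * ((Ω q) ^ 2 * ((q j - m j) * (q k - m k))) := by
      funext q
      calc f q * f q
          = (∑ j, a j * (q j - m j)) * (∑ k, a k * (q k - m k)) * (Ω q) ^ 2 := by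
            simp only [hfdef]; ring
        _ = (∑ j, ∑ k, (a j * (q j - m j)) * (a k * (q k - m k))) * (Ω q) ^ 2 := by
            rw [Finset.sum_mul_sum]
        _ = ∑ j, (∑ k, (a j * (q j - m j)) * (a k * (q k - m k))) * (Ω q) ^ 2 := by
            rw [Finset.sum_mul]
        _ = ∑ j, ∑ k, ((a j * (q j - m j)) * (a k * (q k - m k))) * (Ω q) ^ 2 := by
            exact Finset.sum_congr rfl fun j _ => Finset.sum_mul _ _ _
        _ = ∑ j, ∑ k, (a j * a k) * ((Ω q) ^ 2 * ((q j - m j) * (q k - m k))) :=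
            Finset.sum_congr rfl fun j _ => Finset.sum_congr rfl fun k _ => by ring
    have egg : (fun q => g q * g q)
        = fun q => ∑ j, ∑ k, (b j * b k) * (pd j Ω q * pd k Ω q) := by
      funext q
      calc g q * g q
          = (∑ j, b j * pd j Ω q) * (∑ k, b k * pd k Ω q) := by simp only [hgdef]
        _ = ∑ j, ∑ k, (b j * pd j Ω q) * (b k * pd k Ω q) := by rw [Finset.sum_mul_sum]
        _ = ∑ j, ∑ k, (b j * b k) * (pd j Ω q * pd k Ω q) :=
            Finset.sum_congr rfl fun j _ => Finset.sum_congr rfl fun k _ => by ring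
    have efg : (fun q => f q * g q)
        = fun q => ∑ j, ∑ k, (a j * b k) * ((q j - m j) * (Ω q * pd k Ω q)) := by
      funext q
      have e0 : f q = ∑ j, a j * (q j - m j) * Ω q := by
        show Ω q * (∑ j, a j * (q j - m j)) = _
        rw [Finset.mul_sum]
        exact Finset.sum_congr rfl fun j _ => by ring
      calc f q * g q
          = (∑ j, a j * (q j - m j) * Ω q) * (∑ k, b k * pd k Ω q) := by rw [e0]
        _ = ∑ j, ∑ k, (a j * (q j - m j) * Ω q) * (b k * pd k Ω q) := by
            rw [Finset.sum_mul_sum]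
        _ = ∑ j, ∑ k, (a j * b k) * ((q j - m j) * (Ω q * pd k Ω q)) :=
            Finset.sum_congr rfl fun j _ => Finset.sum_congr rfl fun k _ => by ring
    have hf2int : Integrable (fun q => f q * f q) := by
      rw [eff]
      exact integrable_finset_sum _ fun j _ => integrable_finset_sum _ fun k _ =>
        (hcovint j k).const_mul _
    have hg2int : Integrable (fun q => g q * g q) := by
      rw [egg]
      exact integrable_finset_sum _ fun j _ => integrable_finset_sum _ fun k _ =>
        (hint2 j k).const_mul _
    have hcs := cs_integral hfm hgm hf2int hg2int
    have eff2 : ∫ q, f q * f q = ∑ j, ∑ k, (a j * a k) * V j k := by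
      rw [eff, integral_double_sum _ _ hcovint]
      exact Finset.sum_congr rfl fun j _ => Finset.sum_congr rfl fun k _ => by
        rw [hcov_eq j k]
    have egg2 : ∫ q, g q * g q = ∑ j, ∑ k, (b j * b k) * G j k := by
      rw [egg, integral_double_sum _ _ hint2]
      rfl
    have efg2 : ∫ q, f q * g q = -(∑ j, a j * b j) / 2 := by
      rw [efg, integral_double_sum _ _ hmix']
      have einner : ∀ j, ∑ k, (a j * b k) * ∫ q, (q j - m j) * (Ω q * pd k Ω q)
          = -(a j * b j) / 2 := by
        intro j
        have hterm : ∀ k : Fin n, (a j * b k) * (-(if k = j then 1 else 0) / 2)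
            = if k = j then -(a j * b j) / 2 else 0 := by
          intro k
          rcases eq_or_ne k j with h | h
          · subst h; rw [if_pos rfl, if_pos rfl]; ring
          · rw [if_neg h, if_neg h]; ring
        calc ∑ k, (a j * b k) * ∫ q, (q j - m j) * (Ω q * pd k Ω q)
            = ∑ k : Fin n, (if k = j then -(a j * b j) / 2 else 0) := by
              refine Finset.sum_congr rfl fun k _ => ?_
              rw [hmix_eq j k]
              exact hterm k
          _ = -(a j * b j) / 2 := by
              rw [Finset.sum_ite_eq' Finset.univ j (fun _ => -(a j * b j) / 2)]
              simp
      rw [Finset.sum_congr rfl fun j _ => einner j]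
      rw [← Finset.sum_div, ← Finset.sum_neg_distrib]
    rw [eff2, egg2, efg2] at hcs
    nlinarith [hcs]
  -- positive semidefiniteness of G - W/4
  have hVW : V * W = 1 := Matrix.mul_nonsing_inv V ((Matrix.isUnit_iff_isUnit_det V).1 hV.isUnit)
  have hWH : W.IsHermitian := hV.1.inv
  have hGH : G.IsHermitian := by
    show Gᴴ = G
    ext j k
    simp only [Matrix.conjTranspose_apply, star_trivial, hGdef, Matrix.of_apply]
    simp_rw [mul_comm]
  have hP : (G - (1/4 : ℝ) • W).PosSemidef := by
    have hPH : (G - (1/4 : ℝ) • W).IsHermitian := by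
      show _ᴴ = _
      rw [Matrix.conjTranspose_sub, Matrix.conjTranspose_smul, hGH.eq, hWH.eq, star_trivial]
    refine Matrix.PosSemidef.of_dotProduct_mulVec_nonneg hPH fun x => ?_
    rw [star_trivial]
    by_cases hx : x = 0
    · simp [hx]
    · have hw : 0 < x ⬝ᵥ W *ᵥ x := by
        have := hW.dotProduct_mulVec_pos hx
        rwa [star_trivial] at this
      have hkey := key (W *ᵥ x) x
      have e1 : ∑ j, (W *ᵥ x) j * x j = x ⬝ᵥ W *ᵥ x :=
        dotProduct_comm (W *ᵥ x) x
      have e2 : ∑ j, ∑ k, ((W *ᵥ x) j * (W *ᵥ x) k) * V j k = x ⬝ᵥ W *ᵥ x := by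
        rw [← quad_eq, Matrix.mulVec_mulVec, hVW, Matrix.one_mulVec]
        exact dotProduct_comm (W *ᵥ x) x
      rw [e1, e2, ← quad_eq G x] at hkey
      have hgq : x ⬝ᵥ W *ᵥ x / 4 ≤ x ⬝ᵥ G *ᵥ x := by
        nlinarith [hkey, hw]
      rw [Matrix.sub_mulVec, Matrix.smul_mulVec, dotProduct_sub,
        dotProduct_smul, smul_eq_mul]
      linarith
  -- square root of M
  obtain ⟨R, hRH, hRR⟩ : ∃ R : Matrix (Fin n) (Fin n) ℝ, R.IsHermitian ∧ R * R = M := by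
    open scoped MatrixOrder in
    exact ⟨CFC.sqrt M, (CFC.sqrt_nonneg M).isSelfAdjoint,
      CFC.sqrt_mul_sqrt_self M (Matrix.nonneg_iff_posSemidef.2 hM.posSemidef)⟩
  have hdetR : IsUnit R.det := by
    refine isUnit_iff_ne_zero.2 fun h => ?_
    have : R.det * R.det = M.det := by rw [← Matrix.det_mul, hRR]
    rw [h, mul_zero] at this
    exact absurd this.symm (ne_of_gt hM.det_pos)
  -- trace inequality
  have htr : (∑ j, ∑ k, M j k * W j k) / 4 ≤ ∑ j, ∑ k, M j k * G j k := by
    have h1 : (R * (G - (1/4 : ℝ) • W) * R).PosSemidef := by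
      have := hP.mul_mul_conjTranspose_same R
      rwa [hRH.eq] at this
    have h2 := trace_nonneg_of_posSemidef h1
    have h3 : (R * (G - (1/4 : ℝ) • W) * R).trace = (M * (G - (1/4 : ℝ) • W)).trace := by
      rw [Matrix.trace_mul_cycle, hRR]
    have h4 : (M * (G - (1/4 : ℝ) • W)).trace
        = ∑ j, ∑ k, M j k * (G k j - 1/4 * W k j) := by
      simp [Matrix.trace, Matrix.mul_apply, Matrix.diag, Matrix.sub_apply, Matrix.smul_apply,
        mul_sub, smul_eq_mul]
    have h5 : ∀ j k : Fin n, G k j = G j k := by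
      intro j k
      have := congrFun (congrFun hGH j) k
      simpa [Matrix.conjTranspose_apply] using this
    have h6 : ∀ j k : Fin n, W k j = W j k := by
      intro j k
      have := congrFun (congrFun hWH j) k
      simpa [Matrix.conjTranspose_apply] using this
    rw [h3, h4] at h2
    have h7 : ∑ j, ∑ k, M j k * (G k j - 1/4 * W k j)
        = (∑ j, ∑ k, M j k * G j k) - (∑ j, ∑ k, M j k * W j k) / 4 := by
      rw [Finset.sum_div, ← Finset.sum_sub_distrib]
      refine Finset.sum_congr rfl fun j _ => ?_
      rw [Finset.sum_div, ← Finset.sum_sub_distrib]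
      refine Finset.sum_congr rfl fun k _ => ?_
      rw [h5 j k, h6 j k]
      ring
    rw [h7] at h2
    linarith
  -- spectral analysis of W * M
  set S := R * W * R with hSdef
  have hS : S.PosDef := posdef_conj hW hdetR hRH.eq
  have hRinv : R⁻¹ * R = 1 := Matrix.nonsing_inv_mul R hdetR
  have hRinv' : R * R⁻¹ = 1 := Matrix.mul_nonsing_inv R hdetR
  have hWM : W * M = R⁻¹ * S * R := by
    have e : R⁻¹ * (R * W * R) * R = (R⁻¹ * R) * (W * (R * R)) := by
      simp only [mul_assoc]
    rw [hSdef, e, hRinv, one_mul, hRR]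
  set uR : (Matrix (Fin n) (Fin n) ℝ)ˣ := ⟨R, R⁻¹, hRinv', hRinv⟩ with huR
  have hspecR : spectrum ℝ (W * M) = Set.range hS.1.eigenvalues := by
    rw [hWM, show R⁻¹ * S * R = ↑uR⁻¹ * S * ↑uR from rfl, spectrum.units_conjugate',
      spec_real hS.1]
  have hmapmul : ∀ A B : Matrix (Fin n) (Fin n) ℝ,
      (A * B).map (Complex.ofReal : ℝ → ℂ) = A.map Complex.ofReal * B.map Complex.ofReal :=
    fun A B => Matrix.map_mul (f := Complex.ofRealHom)
  have hmapone : (1 : Matrix (Fin n) (Fin n) ℝ).map (Complex.ofReal : ℝ → ℂ) = 1 :=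
    Matrix.map_one Complex.ofReal Complex.ofReal_zero Complex.ofReal_one
  set uRC : (Matrix (Fin n) (Fin n) ℂ)ˣ :=
    ⟨R.map Complex.ofReal, R⁻¹.map Complex.ofReal,
      by rw [← hmapmul, hRinv', hmapone], by rw [← hmapmul, hRinv, hmapone]⟩ with huRC
  have hspecC : spectrum ℂ ((W * M).map (Complex.ofReal : ℝ → ℂ))
      = Set.range (fun i => (hS.1.eigenvalues i : ℂ)) := by
    rw [hWM, hmapmul, hmapmul,
      show R⁻¹.map (Complex.ofReal : ℝ → ℂ) * S.map Complex.ofReal * R.map Complex.ofReal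
        = ↑uRC⁻¹ * S.map Complex.ofReal * ↑uRC from rfl,
      spectrum.units_conjugate', spec_complex hS.1]
  have htrWM : (W * M).trace = ∑ i, hS.1.eigenvalues i := by
    rw [hWM, Matrix.trace_mul_cycle, hRinv', one_mul, trace_eq_sum_eig hS.1]
  have htrWM' : (W * M).trace = ∑ j, ∑ k, M j k * W j k := by
    rw [Matrix.trace]
    simp only [Matrix.diag, Matrix.mul_apply]
    refine Finset.sum_congr rfl fun j _ => Finset.sum_congr rfl fun k _ => ?_
    rw [show M k j = M j k from by
      have := congrFun (congrFun hM.1 j) k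
      simpa [Matrix.conjTranspose_apply] using this]
    ring
  obtain ⟨i0, -, hmax⟩ := Finset.exists_max_image Finset.univ hS.1.eigenvalues
    ⟨⟨0, hn⟩, Finset.mem_univ _⟩
  constructor
  · intro μ hμ
    rw [hspecC] at hμ
    obtain ⟨i, rfl⟩ := hμ
    exact ⟨Complex.ofReal_im _, by
      rw [Complex.ofReal_re]; exact hS.eigenvalues_pos i⟩
  · refine ⟨hS.1.eigenvalues i0, ?_, ?_, ?_⟩
    · rw [hspecR]; exact ⟨i0, rfl⟩
    · intro r hr
      rw [hspecR] at hr
      obtain ⟨i, rfl⟩ := hr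
      exact hmax i (Finset.mem_univ i)
    · rw [ge_iff_le, e_meanQ]
      have h8 : hS.1.eigenvalues i0 ≤ ∑ i, hS.1.eigenvalues i :=
        Finset.single_le_sum (fun i _ => (hS.eigenvalues_pos i).le) (Finset.mem_univ i0)
      have h9 : ∑ j, ∑ k, M j k * W j k = ∑ i, hS.1.eigenvalues i := by
        rw [← htrWM', htrWM]
      have hb2 : (0 : ℝ) < hbar ^ 2 := pow_pos hhbar 2
      nlinarith [htr, h8, h9]
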